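/- arXiv:1805.01606 — 3 statements merged into one kernel-verified Lean document; each statement's English description precedes it below -/
import Mathlib

section
/- For coprime positive integers m, n, the number of lattice paths from (0,0) to (m,n) using unit horizontal steps (1,0) and unit vertical steps (0,1) that stay weakly above the diagonal line y = (n/m)x equals (1/(m+n)) * binomial(m+n, n) (the rational Catalan number). -/
open scoped Classical
open Finset

/-- A lattice path is encoded as a list of steps: `false` = horizontal step `(1,0)`,
`true` = vertical step `(0,1)`.  `IsDyck m n w` says `w` is an `(m,n)`-Dyck path:
it has `m` horizontal and `n` vertical steps and every intermediate lattice point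
`(x,y)` satisfies `n*x ≤ m*y` (the path stays weakly above the diagonal `y=(n/m)x`). -/
def IsDyck (m n : ℕ) (w : List Bool) : Prop :=
  w.count false = m ∧ w.count true = n ∧
    ∀ p ∈ w.inits, n * p.count false ≤ m * p.count true

/-- `x`-coordinate of the point of the path reached after the first `i` steps. -/
def ptX (w : List Bool) (i : ℕ) : ℤ := ((w.take i).count false : ℤ)

/-- `y`-coordinate of the point of the path reached after the first `i` steps. -/
def ptY (w : List Bool) (i : ℕ) : ℤ := ((w.take i).count true : ℤ)

/-- `O(γ)`: pairs `(i,j)` of a horizontal step `i` and a vertical step `j`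
appearing later in the path. -/
def Opairs (w : List Bool) : Finset (ℕ × ℕ) :=
  (Finset.range w.length ×ˢ Finset.range w.length).filter
    (fun ij => ij.1 < ij.2 ∧ w[ij.1]? = some false ∧ w[ij.2]? = some true)

/-- The set of (bottom-left corners of) complete unit lattice squares lying between the
path and the diagonal `y = (n/m)x`: the square `[x,x+1]×[y,y+1]` lies weakly above the
diagonal and strictly below the path. -/
noncomputable def areaSet (m n : ℕ) (w : List Bool) : Finset (ℕ × ℕ) :=
  ((Finset.range m) ×ˢ (Finset.range n)).filter (fun xy =>
    n * (xy.1 + 1) ≤ m * xy.2 ∧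
    ∃ i < w.length, w[i]? = some false ∧
      (w.take (i+1)).count false = xy.1 + 1 ∧ xy.2 + 1 ≤ (w.take (i+1)).count true)

/-- `area(γ)`: the number of complete unit lattice squares between the path and the
diagonal. -/
noncomputable def area (m n : ℕ) (w : List Bool) : ℕ := (areaSet m n w).card

/-- Some line of slope `n/m` (i.e. `{(x,y) | n*x - m*y = c}`) meets both the closed
horizontal step segment `i` and the closed vertical step segment `j`. -/
def MeetsBoth (m n : ℕ) (w : List Bool) (i j : ℕ) : Prop :=
  ∃ c : ℝ,
    (∃ x : ℝ, (ptX w i : ℝ) ≤ x ∧ x ≤ (ptX w i : ℝ) + 1 ∧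
      (n : ℝ) * x - (m : ℝ) * (ptY w i : ℝ) = c) ∧
    (∃ y : ℝ, (ptY w j : ℝ) ≤ y ∧ y ≤ (ptY w j : ℝ) + 1 ∧
      (n : ℝ) * (ptX w j : ℝ) - (m : ℝ) * y = c)

/-- Condition (1A): the line of slope `n/m` through the left endpoint `(a-1,b)` of the
horizontal step `i` meets the closed vertical step segment `j`. -/
def Cond1A (m n : ℕ) (w : List Bool) (i j : ℕ) : Prop :=
  ∃ y : ℝ, (ptY w j : ℝ) ≤ y ∧ y ≤ (ptY w j : ℝ) + 1 ∧
    (n : ℝ) * ((ptX w j : ℝ) - (ptX w i : ℝ)) = (m : ℝ) * (y - (ptY w i : ℝ))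

/-- Condition (2A): the line of slope `n/m` through the top endpoint `(a',b'+1)` of the
vertical step `j` meets the closed horizontal step segment `i`. -/
def Cond2A (m n : ℕ) (w : List Bool) (i j : ℕ) : Prop :=
  ∃ x : ℝ, (ptX w i : ℝ) ≤ x ∧ x ≤ (ptX w i : ℝ) + 1 ∧
    (n : ℝ) * (x - (ptX w j : ℝ)) = (m : ℝ) * ((ptY w i : ℝ) - ((ptY w j : ℝ) + 1))

/-- `H(γ)`: pairs in `O(γ)` admitting a common transversal line parallel to the
diagonal. -/
noncomputable def Hpairs (m n : ℕ) (w : List Bool) : Finset (ℕ × ℕ) :=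
  (Opairs w).filter (fun ij => MeetsBoth m n w ij.1 ij.2)

/-- `H₁(γ)`: pairs in `O(γ)` satisfying condition (1A). -/
noncomputable def H1pairs (m n : ℕ) (w : List Bool) : Finset (ℕ × ℕ) :=
  (Opairs w).filter (fun ij => Cond1A m n w ij.1 ij.2)

/-- `H₂(γ)`: pairs in `O(γ)` satisfying condition (2A). -/
noncomputable def H2pairs (m n : ℕ) (w : List Bool) : Finset (ℕ × ℕ) :=
  (Opairs w).filter (fun ij => Cond2A m n w ij.1 ij.2)

/-- The line of slope `n/m` through the point `(px,py)` meets the closed segment of the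
horizontal step `i`. -/
def lineHitsH (m n : ℕ) (w : List Bool) (px py : ℤ) (i : ℕ) : Prop :=
  w[i]? = some false ∧
    ∃ x : ℝ, (ptX w i : ℝ) ≤ x ∧ x ≤ (ptX w i : ℝ) + 1 ∧
      (n : ℝ) * (x - (px : ℝ)) = (m : ℝ) * ((ptY w i : ℝ) - (py : ℝ))

/-- The line of slope `n/m` through the point `(px,py)` meets the closed segment of the
vertical step `j`. -/
def lineHitsV (m n : ℕ) (w : List Bool) (px py : ℤ) (j : ℕ) : Prop :=
  w[j]? = some true ∧
    ∃ y : ℝ, (ptY w j : ℝ) ≤ y ∧ y ≤ (ptY w j : ℝ) + 1 ∧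
      (n : ℝ) * ((ptX w j : ℝ) - (px : ℝ)) = (m : ℝ) * (y - (py : ℝ))

/-- Outer vertices of the path, encoded by the index `j` of a vertical step that is
immediately followed by a horizontal step; the vertex itself is the point
`(ptX w (j+1), ptY w (j+1))`. -/
def outerIdx (w : List Bool) : Finset ℕ :=
  (Finset.range w.length).filter
    (fun j => w[j]? = some true ∧ w[j+1]? = some false)

/-- The perpendicular distance from the diagonal of the outer vertex indexed by `j`,
measured by `m*y - n*x` (proportional to the true distance). -/
def diagDist (m n : ℕ) (w : List Bool) (j : ℕ) : ℤ :=
  (m : ℤ) * ptY w (j+1) - (n : ℤ) * ptX w (j+1)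

/-- `V(γ)`: outer vertices other than one farthest from the diagonal. -/
def Vset (m n : ℕ) (w : List Bool) : Finset ℕ :=
  (outerIdx w).filter (fun j => ∃ j' ∈ outerIdx w, diagDist m n w j < diagDist m n w j')

/-- `k(p)`: the number of horizontal steps of the path, other than the horizontal step
starting at the outer vertex `p` (indexed by `j`), met by the line of slope `n/m`
through `p`. -/
noncomputable def kH (m n : ℕ) (w : List Bool) (j : ℕ) : ℕ :=
  ((Finset.range w.length).filter
    (fun i => i ≠ j + 1 ∧ lineHitsH m n w (ptX w (j+1)) (ptY w (j+1)) i)).card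

/-- The number of vertical steps of the path, other than the vertical step ending at the
outer vertex `p` (indexed by `j`), met by the line of slope `n/m` through `p`. -/
noncomputable def kV (m n : ℕ) (w : List Bool) (j : ℕ) : ℕ :=
  ((Finset.range w.length).filter
    (fun i => i ≠ j ∧ lineHitsV m n w (ptX w (j+1)) (ptY w (j+1)) i)).card

/-- `k₁(p)`: the number of vertical steps occurring after the outer vertex `p`
(indexed by `j`) met by the line of slope `n/m` through `p`. -/
noncomputable def k1 (m n : ℕ) (w : List Bool) (j : ℕ) : ℕ :=
  ((Finset.range w.length).filter
    (fun i => j < i ∧ lineHitsV m n w (ptX w (j+1)) (ptY w (j+1)) i)).card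

/-- `k₂(p)`: the number of horizontal steps occurring before the outer vertex `p`
(indexed by `j`) met by the line of slope `n/m` through `p`. -/
noncomputable def k2 (m n : ℕ) (w : List Bool) (j : ℕ) : ℕ :=
  ((Finset.range w.length).filter
    (fun i => i ≤ j ∧ lineHitsH m n w (ptX w (j+1)) (ptY w (j+1)) i)).card

/-- The insertion map `γ ↦ γ*`: insert one horizontal step immediately after each
vertical step. -/
def star : List Bool → List Bool
  | [] => []
  | true :: w => true :: false :: star w
  | false :: w => false :: star w

/-- The index in `γ*` of the step corresponding to the step of index `i` in `γ`. -/
def starIdx (w : List Bool) (i : ℕ) : ℕ := i + (w.take i).count true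

/-- A Dyck path is rugged if every vertical step is immediately followed by a
horizontal step. -/
def Rugged (w : List Bool) : Prop :=
  ∀ i, w[i]? = some true → w[i+1]? = some false

def Sval (m n : ℕ) (w : List Bool) : ℤ := (m : ℤ) * w.count true - (n : ℤ) * w.count false

lemma Sval_append (m n : ℕ) (a b : List Bool) :
    Sval m n (a ++ b) = Sval m n a + Sval m n b := by
  simp only [Sval, List.count_append]; push_cast; ring

lemma count_tf (w : List Bool) : w.count true + w.count false = w.length := by
  induction w with
  | nil => simp
  | cons a l ih => cases a <;> simp [List.count_cons] <;> omega

lemma isDyck_iff (m n : ℕ) (w : List Bool) :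
    IsDyck m n w ↔ w.count false = m ∧ w.count true = n ∧
      ∀ i, 0 ≤ Sval m n (w.take i) := by
  have key : ∀ p : List Bool, (n * p.count false ≤ m * p.count true) ↔ 0 ≤ Sval m n p := by
    intro p
    rw [Sval, sub_nonneg]
    exact_mod_cast Iff.symm Nat.cast_le
  constructor
  · rintro ⟨h1, h2, h3⟩
    refine ⟨h1, h2, fun i => ?_⟩
    rw [← key]
    exact h3 _ ((List.mem_inits _ _).2 (List.take_prefix i w))
  · rintro ⟨h1, h2, h3⟩
    refine ⟨h1, h2, fun p hp => ?_⟩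
    rw [key]
    rw [List.prefix_iff_eq_take.1 ((List.mem_inits _ _).1 hp)]
    exact h3 _

lemma Sval_take (m n : ℕ) (w : List Bool) (i : ℕ) (hi : i ≤ w.length) :
    Sval m n (w.take i) = (m + n : ℤ) * (w.take i).count true - n * i := by
  have h1 : (w.take i).count true + (w.take i).count false = i := by
    rw [count_tf, List.length_take]; omega
  have h2 : ((w.take i).count false : ℤ) = (i : ℤ) - (w.take i).count true := by omega
  rw [Sval, h2]; ring

lemma take_inj (m n : ℕ) (h : Nat.Coprime m n) (hm : 0 < m) (hn : 0 < n)
    (w : List Bool) (hlen : w.length = m + n)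
    (i j : ℕ) (hi : i < m + n) (hj : j < m + n)
    (hS : Sval m n (w.take i) = Sval m n (w.take j)) : i = j := by
  have co : Nat.Coprime n (m + n) := by
    simpa [Nat.add_comm] using (Nat.coprime_add_self_right (m := n) (n := m)).2 h.symm
  rw [Sval_take m n w i (by omega), Sval_take m n w j (by omega)] at hS
  have hdvd : ((m + n : ℕ) : ℤ) ∣ (n : ℤ) * ((i : ℤ) - (j : ℤ)) := by
    refine ⟨((w.take i).count true : ℤ) - ((w.take j).count true : ℤ), ?_⟩
    push_cast at hS ⊢
    linarith
  have hco : IsCoprime ((m + n : ℕ) : ℤ) (n : ℤ) := by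
    rw [Nat.isCoprime_iff_coprime]
    exact co.symm
  have hdvd2 : ((m + n : ℕ) : ℤ) ∣ ((i : ℤ) - (j : ℤ)) := hco.dvd_of_dvd_mul_left hdvd
  have : (i : ℤ) - (j : ℤ) = 0 := by
    refine Int.eq_zero_of_abs_lt_dvd hdvd2 ?_
    rw [abs_sub_lt_iff]
    constructor <;> push_cast <;> omega
  omega

lemma Sval_rotate_take (m n : ℕ) (w : List Bool) (hlen : w.length = m + n)
    (h0 : Sval m n w = 0) (k j : ℕ) (hk : k ≤ m + n) (hj : j ≤ m + n) :
    Sval m n ((w.rotate k).take j) =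
      (if k + j ≤ m + n then Sval m n (w.take (k + j))
        else Sval m n (w.take (k + j - (m + n)))) - Sval m n (w.take k) := by
  rw [List.rotate_eq_drop_append_take (by omega), List.take_append,
    Sval_append]
  have hld : (w.drop k).length = m + n - k := by simp [hlen]
  by_cases hc : k + j ≤ m + n
  · rw [if_pos hc]
    have hj' : j ≤ m + n - k := by omega
    have : w.take (k + j) = w.take k ++ (w.drop k).take j := List.take_add (l := w) (i := k) (j := j)
    have h2 : Sval m n (w.take (k + j)) = Sval m n (w.take k) + Sval m n ((w.drop k).take j) := by
      rw [this, Sval_append]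
    have h3 : j - (w.drop k).length = 0 := by omega
    have hnil : Sval m n ([] : List Bool) = 0 := by simp [Sval]
    rw [h3]
    simp only [List.take_zero]
    rw [hnil]
    linarith
  · rw [if_neg hc]
    have h4 : (w.drop k).take j = w.drop k := by
      apply List.take_of_length_le; omega
    have h5 : Sval m n (w.drop k) = -Sval m n (w.take k) := by
      have := Sval_append m n (w.take k) (w.drop k)
      rw [List.take_append_drop] at this
      linarith [h0]
    have h6 : j - (w.drop k).length = k + j - (m + n) := by omega
    have h7 : (w.take k).take (k + j - (m + n)) = w.take (k + j - (m + n)) := by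
      rw [List.take_take]
      congr 1
      omega
    rw [h4, h5, h6, h7]
    ring

lemma dyck_rotate_iff_min (m n : ℕ) (w : List Bool) (hlen : w.length = m + n)
    (hf : w.count false = m) (ht : w.count true = n) (k : ℕ) (hk : k < m + n) :
    IsDyck m n (w.rotate k) ↔ ∀ i ≤ m + n, Sval m n (w.take k) ≤ Sval m n (w.take i) := by
  have h0 : Sval m n w = 0 := by rw [Sval, hf, ht]; ring
  have helen : (w.rotate k).length = m + n := by rw [List.length_rotate, hlen]
  have hperm := List.rotate_perm w k
  have hcf : (w.rotate k).count false = m := by rw [hperm.count_eq, hf]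
  have hct : (w.rotate k).count true = n := by rw [hperm.count_eq, ht]
  rw [isDyck_iff]
  constructor
  · rintro ⟨-, -, h3⟩ i hi
    by_cases hik : k ≤ i
    · have := h3 (i - k)
      rw [Sval_rotate_take m n w hlen h0 k (i - k) (by omega) (by omega),
        if_pos (by omega)] at this
      have he : k + (i - k) = i := by omega
      rw [he] at this
      linarith
    · rcases Nat.eq_zero_or_pos i with hi0 | hi0
      · subst hi0
        have := h3 (m + n - k)
        rw [Sval_rotate_take m n w hlen h0 k (m + n - k) (by omega) (by omega),
          if_pos (by omega)] at this
        have he : k + (m + n - k) = m + n := by omega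
        rw [he, ← hlen, List.take_length, h0] at this
        have hnil : Sval m n ([] : List Bool) = 0 := by simp [Sval]
        simp only [List.take_zero]
        rw [hnil]
        linarith
      · have := h3 (m + n - k + i)
        rw [Sval_rotate_take m n w hlen h0 k (m + n - k + i) (by omega) (by omega),
          if_neg (by omega)] at this
        have he : k + (m + n - k + i) - (m + n) = i := by omega
        rw [he] at this
        linarith
  · intro hmin
    refine ⟨hcf, hct, fun j => ?_⟩
    by_cases hjl : j ≤ m + n
    · rw [Sval_rotate_take m n w hlen h0 k j (by omega) hjl]
      by_cases hc : k + j ≤ m + n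
      · rw [if_pos hc]
        linarith [hmin (k + j) (by omega)]
      · rw [if_neg hc]
        linarith [hmin (k + j - (m + n)) (by omega)]
    · have : (w.rotate k).take j = (w.rotate k).take (m + n) := by
        rw [← helen, List.take_length, List.take_of_length_le (by omega)]
      rw [this, Sval_rotate_take m n w hlen h0 k (m + n) (by omega) le_rfl]
      by_cases hc : k + (m + n) ≤ m + n
      · rw [if_pos hc]
        linarith [hmin (k + (m + n)) (by omega)]
      · rw [if_neg hc]
        have he : k + (m + n) - (m + n) = k := by omega
        rw [he]
        linarith

lemma dyck_rotate_unique (m n : ℕ) (h : Nat.Coprime m n) (hm : 0 < m) (hn : 0 < n)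
    (w : List Bool) (hlen : w.length = m + n)
    (hf : w.count false = m) (ht : w.count true = n)
    (k k' : ℕ) (hk : k < m + n) (hk' : k' < m + n)
    (hd : IsDyck m n (w.rotate k)) (hd' : IsDyck m n (w.rotate k')) : k = k' := by
  rw [dyck_rotate_iff_min m n w hlen hf ht k hk] at hd
  rw [dyck_rotate_iff_min m n w hlen hf ht k' hk'] at hd'
  exact take_inj m n h hm hn w hlen k k' hk hk'
    (le_antisymm (hd k' (by omega)) (hd' k (by omega)))

lemma exists_dyck_rotate (m n : ℕ) (hm : 0 < m) (hn : 0 < n)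
    (w : List Bool) (hlen : w.length = m + n)
    (hf : w.count false = m) (ht : w.count true = n) :
    ∃ k < m + n, IsDyck m n (w.rotate k) := by
  obtain ⟨k, hkmem, hkmin⟩ := Finset.exists_min_image (Finset.range (m + n))
    (fun i => Sval m n (w.take i)) ⟨0, Finset.mem_range.2 (by omega)⟩
  rw [Finset.mem_range] at hkmem
  refine ⟨k, hkmem, (dyck_rotate_iff_min m n w hlen hf ht k hkmem).2 ?_⟩
  intro i hi
  rcases Nat.lt_or_ge i (m + n) with hi' | hi'
  · exact hkmin i (Finset.mem_range.2 hi')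
  · have hie : i = m + n := by omega
    have : w.take i = w := by rw [hie, ← hlen, List.take_length]
    have h0 : Sval m n w = 0 := by rw [Sval, hf, ht]; ring
    rw [this, h0]
    have h2 := hkmin 0 (Finset.mem_range.2 (by omega))
    simpa [Sval, sub_nonpos] using h2

noncomputable def allLists (N : ℕ) : Finset (List Bool) :=
  (Finset.univ : Finset (Fin N → Bool)).image List.ofFn

lemma mem_allLists (N : ℕ) (l : List Bool) : l ∈ allLists N ↔ l.length = N := by
  constructor
  · intro hl
    obtain ⟨f, -, rfl⟩ := Finset.mem_image.1 hl
    simp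
  · intro h
    refine Finset.mem_image.2 ⟨fun i => l.get (Fin.cast h.symm i), Finset.mem_univ _, ?_⟩
    apply List.ext_getElem
    · simp [h]
    · intro i h1 h2
      simp [List.getElem_ofFn]

lemma count_ind (l : List Bool) :
    (l.count true : ℕ) = (l.map (fun b => if b then 1 else 0)).sum := by
  induction l with
  | nil => simp
  | cons a t ih => cases a <;> simp [List.count_cons, ih] <;> omega

lemma count_ofFn_true {N : ℕ} (f : Fin N → Bool) :
    (List.ofFn f).count true = (Finset.univ.filter fun i => f i = true).card := by
  rw [count_ind, List.map_ofFn, List.sum_ofFn, Finset.card_filter]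
  exact Finset.sum_congr rfl (fun i _ => by cases h : f i <;> simp [h])

lemma card_allW (N k : ℕ) :
    ((allLists N).filter (fun w => w.count true = k)).card = N.choose k := by
  rw [allLists, Finset.filter_image, Finset.card_image_of_injective _ List.ofFn_injective]
  have := Finset.card_powersetCard k (Finset.univ : Finset (Fin N))
  rw [Finset.card_univ, Fintype.card_fin] at this
  rw [← this]
  refine Finset.card_bij (fun f _ => Finset.univ.filter (fun i => f i = true)) ?_ ?_ ?_
  · intro f hf
    rw [Finset.mem_filter] at hf
    rw [Finset.mem_powersetCard]
    exact ⟨Finset.filter_subset _ _, by rw [← count_ofFn_true, hf.2]⟩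
  · intro f hf g hg hfg
    funext i
    have := Finset.ext_iff.1 hfg i
    simp only [Finset.mem_filter, Finset.mem_univ, true_and] at this
    cases hfi : f i <;> cases hgi : g i <;> simp_all
  · intro s hs
    rw [Finset.mem_powersetCard] at hs
    have hset : (Finset.univ.filter fun i => decide (i ∈ s) = true) = s := by
      ext i; simp
    refine ⟨fun i => decide (i ∈ s), Finset.mem_filter.2 ⟨Finset.mem_univ _, ?_⟩, hset⟩
    rw [count_ofFn_true, hset, hs.2]

noncomputable def dck (m n : ℕ) : Finset (List Bool) :=
  (allLists (m + n)).filter (IsDyck m n)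

lemma mem_dck (m n : ℕ) (w : List Bool) : w ∈ dck m n ↔ IsDyck m n w := by
  rw [dck, Finset.mem_filter, mem_allLists]
  refine ⟨fun h => h.2, fun h => ⟨?_, h⟩⟩
  obtain ⟨h1, h2, -⟩ := h
  have := count_tf w
  omega

lemma dck_counts (m n : ℕ) (h : Nat.Coprime m n) (hm : 0 < m) (hn : 0 < n) :
    (dck m n).card * (m + n) = (m + n).choose n := by
  have key : ((dck m n) ×ˢ Finset.range (m + n)).card
      = ((allLists (m + n)).filter (fun w => w.count true = n)).card := by
    refine Finset.card_bij (fun p _ => p.1.rotate p.2) ?_ ?_ ?_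
    · rintro ⟨d, k⟩ hp
      rw [Finset.mem_product, mem_dck, Finset.mem_range] at hp
      dsimp only at hp ⊢
      obtain ⟨⟨h1, h2, -⟩, hk⟩ := hp
      rw [Finset.mem_filter, mem_allLists]
      have hperm := List.rotate_perm d k
      refine ⟨?_, by rw [hperm.count_eq, h2]⟩
      rw [List.length_rotate]
      have := count_tf d
      omega
    · rintro ⟨d, k⟩ hp ⟨d', k'⟩ hp' heq
      rw [Finset.mem_product, mem_dck, Finset.mem_range] at hp hp'
      obtain ⟨hd, hk⟩ := hp
      obtain ⟨hd', hk'⟩ := hp'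
      replace hd : IsDyck m n d := hd
      replace hd' : IsDyck m n d' := hd'
      replace hk : k < m + n := hk
      replace hk' : k' < m + n := hk'
      replace heq : d.rotate k = d'.rotate k' := heq
      have hld : d.length = m + n := by
        obtain ⟨h1, h2, -⟩ := hd; have := count_tf d; omega
      have hld' : d'.length = m + n := by
        obtain ⟨h1, h2, -⟩ := hd'; have := count_tf d'; omega
      -- Step 1: d = d'
      have h1 : (d.rotate k).rotate (m + n - k) = d := by
        rw [List.rotate_rotate]
        have he : k + (m + n - k) = m + n := by omega
        rw [he, ← hld, List.rotate_length]
      have h2 : d'.rotate ((k' + (m + n - k)) % (m + n)) = d := by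
        have := List.rotate_mod d' (k' + (m + n - k))
        rw [hld'] at this
        rw [this, ← List.rotate_rotate, ← heq, h1]
      have hdd : d = d' := by
        have hr0 : (k' + (m + n - k)) % (m + n) = 0 := by
          refine dyck_rotate_unique m n h hm hn d' hld' hd'.1 hd'.2.1 _ 0
            (Nat.mod_lt _ (by omega)) (by omega) ?_ ?_
          · rw [h2]; exact hd
          · rw [List.rotate_zero]; exact hd'
        rw [hr0, List.rotate_zero] at h2
        exact h2.symm
      subst hdd
      -- Step 2: k = k'
      have h3 : d.rotate ((k + (m + n - k')) % (m + n)) = d := by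
        have hmod := List.rotate_mod d (k + (m + n - k'))
        rw [hld] at hmod
        rw [hmod, ← List.rotate_rotate, heq, List.rotate_rotate]
        have he : k' + (m + n - k') = m + n := by omega
        rw [he, ← hld, List.rotate_length]
      have hr0 : (k + (m + n - k')) % (m + n) = 0 := by
        refine dyck_rotate_unique m n h hm hn d hld hd.1 hd.2.1 _ 0
          (Nat.mod_lt _ (by omega)) (by omega) ?_ ?_
        · rw [h3]; exact hd
        · rw [List.rotate_zero]; exact hd
      have hdvd : (m + n) ∣ (k + (m + n - k')) := Nat.dvd_of_mod_eq_zero hr0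
      have hkk : k = k' := by
        obtain ⟨c, hc⟩ := hdvd
        have hc2 : c < 2 := by
          by_contra hcge
          have : (m + n) * 2 ≤ (m + n) * c := Nat.mul_le_mul_left _ (by omega)
          omega
        interval_cases c <;> omega
      rw [hkk]
    · intro w hw
      rw [Finset.mem_filter, mem_allLists] at hw
      obtain ⟨hlw, htw⟩ := hw
      have hfw : w.count false = m := by have := count_tf w; omega
      obtain ⟨k, hk, hdk⟩ := exists_dyck_rotate m n hm hn w hlw hfw htw
      have hlrot : (w.rotate k).length = m + n := by rw [List.length_rotate, hlw]
      refine ⟨(w.rotate k, (m + n - k) % (m + n)), ?_, ?_⟩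
      · rw [Finset.mem_product, mem_dck, Finset.mem_range]
        exact ⟨hdk, Nat.mod_lt _ (by omega)⟩
      · simp only
        have hmod := List.rotate_mod (w.rotate k) (m + n - k)
        rw [hlrot] at hmod
        rw [hmod, List.rotate_rotate]
        have he : k + (m + n - k) = m + n := by omega
        rw [he, ← hlw, List.rotate_length]
  rw [Finset.card_product, Finset.card_range, card_allW] at key
  exact key

/-- the number of `(m,n)`-Dyck paths is the rational Catalan number
`(1/(m+n)) * choose (m+n) n`. -/
theorem statement0 (m n : ℕ) (hm : 0 < m) (hn : 0 < n) (h : Nat.Coprime m n) :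
    (Nat.card {w : List Bool // IsDyck m n w} : ℚ) =
      (1 / (m + n : ℚ)) * ((m + n).choose n : ℚ) := by
  have hc := dck_counts m n h hm hn
  have e : {w : List Bool // IsDyck m n w} ≃ {w // w ∈ dck m n} :=
    Equiv.subtypeEquivRight (fun w => (mem_dck m n w).symm)
  rw [Nat.card_congr e, Nat.card_eq_finsetCard]
  have hne : ((m : ℚ) + n) ≠ 0 := by positivity
  field_simp
  push_cast [← hc]
  ring
end

section
/- Let m, n be coprime positive integers and γ an (m,n)-Dyck path. Let r_h be a horizontal step ending at (a,b) and r_v a vertical step starting at (a',b') with r_v after r_h in γ. Then there exists a line of slope n/m intersecting both r_h and r_v if and only if -n < n(a'-a) - m(b'-b) < m. Moreover, the two conditions '-n < n(a'-a)-m(b'-b) < m-n' and 'm-n < n(a'-a)-m(b'-b) < m' are mutually exclusive and their disjunction is equivalent to the existence of such a common transversal line. -/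
open scoped Classical
open Finset

private lemma small_dvd' {m t : ℤ} (hd : m ∣ t) (h0 : 0 ≤ t) (h1 : t < m) : t = 0 := by
  rcases h0.lt_or_eq with h | h
  · exact absurd (Int.le_of_dvd h hd) (not_le.2 h1)
  · omega

private lemma statement6_core (m n : ℕ) (hm : 0 < m) (hn : 0 < n) (h : Nat.Coprime m n)
    (w : List Bool)
    (hcf : w.count false = m) (hct : w.count true = n)
    (hdyck : ∀ p ∈ w.inits, n * p.count false ≤ m * p.count true)
    (i j : ℕ) (hj_len : j < w.length) (hlt : i < j)
    (hgi : w[i]? = some false) (hgj : w[j]? = some true) :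
    ((∃ c : ℝ,
      (∃ x : ℝ, (((w.take i).count false : ℤ) : ℝ) ≤ x ∧
          x ≤ (((w.take i).count false : ℤ) : ℝ) + 1 ∧
          (n : ℝ) * x - (m : ℝ) * (((w.take i).count true : ℤ) : ℝ) = c) ∧
      (∃ y : ℝ, (((w.take j).count true : ℤ) : ℝ) ≤ y ∧
          y ≤ (((w.take j).count true : ℤ) : ℝ) + 1 ∧
          (n : ℝ) * (((w.take j).count false : ℤ) : ℝ) - (m : ℝ) * y = c)) ↔
      (0 < (n : ℤ) * (((w.take j).count false : ℤ) - ((w.take i).count false : ℤ))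
            - (m : ℤ) * (((w.take j).count true : ℤ) - ((w.take i).count true : ℤ)) ∧
        (n : ℤ) * (((w.take j).count false : ℤ) - ((w.take i).count false : ℤ))
            - (m : ℤ) * (((w.take j).count true : ℤ) - ((w.take i).count true : ℤ))
          < (m : ℤ) + n)) ∧
    (n : ℤ) * (((w.take j).count false : ℤ) - ((w.take i).count false : ℤ))
        - (m : ℤ) * (((w.take j).count true : ℤ) - ((w.take i).count true : ℤ)) ≠ (m : ℤ) := by
  have hm' : (0:ℤ) < m := by exact_mod_cast hm
  have hn' : (0:ℤ) < n := by exact_mod_cast hn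
  set a : ℤ := ((w.take i).count false : ℤ) with haa
  set b : ℤ := ((w.take i).count true : ℤ) with hbb
  set a' : ℤ := ((w.take j).count false : ℤ) with haa'
  set b' : ℤ := ((w.take j).count true : ℤ) with hbb'
  have hmono : ∀ (c : Bool) (k l : ℕ), k ≤ l → (w.take k).count c ≤ (w.take l).count c := by
    intro c k l hkl
    have h1 : w.take k = (w.take l).take k := by
      rw [List.take_take, Nat.min_eq_left hkl]
    rw [h1]
    exact ((w.take l).take_sublist k).count_le c
  have htail : ∀ (c : Bool) (k : ℕ), w[k]? = some c →
      (w.take (k+1)).count c = (w.take k).count c + 1 := by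
    intro c k hk
    rw [List.take_succ]
    rw [hk]
    simp
  have hA : a + 1 ≤ a' := by
    have h1 := htail false i hgi
    have h2 := hmono false (i+1) j hlt
    omega
  have hB : b ≤ b' := by
    have := hmono true i j hlt.le
    omega
  have hA0 : (0:ℤ) ≤ a := by omega
  have hB0 : (0:ℤ) ≤ b := by omega
  have hAm : a' ≤ (m : ℤ) := by
    have := (w.take_sublist j).count_le false
    omega
  have hBn : b' + 1 ≤ (n : ℤ) := by
    have h1 := htail true j hgj
    have h2 := (w.take_sublist (j+1)).count_le true
    omega
  have hdyckj : (n : ℤ) * a' ≤ (m : ℤ) * b' := by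
    have := hdyck (w.take j) ((List.mem_inits _ _).2 (List.take_prefix j w))
    rw [haa', hbb']
    exact_mod_cast this
  have hcop : IsCoprime (m : ℤ) (n : ℤ) :=
    Int.isCoprime_iff_gcd_eq_one.mpr (by exact_mod_cast h)
  set E : ℤ := (n : ℤ) * (a' - a) - (m : ℤ) * (b' - b) with hE
  have hextreme : ∀ t : ℤ, (m:ℤ) ∣ t → 1 ≤ t → t ≤ m → t = m := by
    intro t hd h1 h2
    obtain ⟨k, hk⟩ := hd
    have hk1 : 1 ≤ k := by
      by_contra hcon
      push_neg at hcon
      have hk0 : k ≤ 0 := by omega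
      have : (m:ℤ) * k ≤ 0 := mul_nonpos_iff.2 (Or.inl ⟨hm'.le, hk0⟩)
      linarith
    have hk2 : k ≤ 1 := by
      by_contra hcon
      push_neg at hcon
      have h2k : (2:ℤ) ≤ k := by omega
      have : (m:ℤ) * 2 ≤ (m:ℤ) * k := mul_le_mul_of_nonneg_left h2k hm'.le
      linarith
    have hk3 : k = 1 := le_antisymm hk2 hk1
    rw [hk, hk3, mul_one]
  have hE0 : E ≠ 0 := by
    intro he
    have heq : (n:ℤ) * (a' - a) = (m:ℤ) * (b' - b) := by
      have := hE.symm.trans he; linarith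
    have hd : (m : ℤ) ∣ (a' - a) := hcop.dvd_of_dvd_mul_left ⟨b' - b, heq⟩
    have ht : a' - a = m := hextreme _ hd (by omega) (by omega)
    have hbn : b' - b = n := by
      have h2 : (m:ℤ) * (b' - b) = (m:ℤ) * n := by
        rw [ht] at heq; linear_combination -heq
      exact mul_left_cancel₀ hm'.ne' h2
    omega
  have hEm : E ≠ (m : ℤ) := by
    intro he
    have heq : (n:ℤ) * (a' - a) = (m:ℤ) * (b' - b + 1) := by
      have := hE.symm.trans he; linarith
    have hd : (m : ℤ) ∣ (a' - a) := hcop.dvd_of_dvd_mul_left ⟨b' - b + 1, heq⟩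
    have ht : a' - a = m := hextreme _ hd (by omega) (by omega)
    have hbn : b' - b + 1 = n := by
      have h2 : (m:ℤ) * (b' - b + 1) = (m:ℤ) * n := by
        rw [ht] at heq; linear_combination -heq
      exact mul_left_cancel₀ hm'.ne' h2
    have ha'm : a' = (m:ℤ) := by omega
    have h3 := hdyckj
    rw [ha'm, mul_comm] at h3
    have h4 : (n:ℤ) ≤ b' := le_of_mul_le_mul_left h3 hm'
    omega
  have hEmn : E ≠ (m : ℤ) + n := by
    intro he
    have heq : (n:ℤ) * (a' - a - 1) = (m:ℤ) * (b' - b + 1) := by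
      have := hE.symm.trans he; linarith
    have hd : (m : ℤ) ∣ (a' - a - 1) := hcop.dvd_of_dvd_mul_left ⟨b' - b + 1, heq⟩
    have ht : a' - a - 1 = 0 := small_dvd' hd (by omega) (by omega)
    rw [ht, mul_zero] at heq
    rcases mul_eq_zero.1 heq.symm with h1 | h1
    · omega
    · omega
  refine ⟨⟨?_, ?_⟩, hEm⟩
  · rintro ⟨c, ⟨x, hx1, hx2, hxc⟩, ⟨y, hy1, hy2, hyc⟩⟩
    have key : ((E : ℤ) : ℝ) = (n : ℝ) * (x - (a:ℝ)) + (m : ℝ) * (y - (b':ℝ)) := by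
      push_cast [hE]
      linarith [hxc.trans hyc.symm]
    have hn0 : (0:ℝ) ≤ (n:ℝ) := by positivity
    have hm0 : (0:ℝ) ≤ (m:ℝ) := by positivity
    have p1 : (0:ℝ) ≤ (n : ℝ) * (x - (a:ℝ)) := mul_nonneg hn0 (by linarith)
    have p2 : (0:ℝ) ≤ (m : ℝ) * (y - (b':ℝ)) := mul_nonneg hm0 (by linarith)
    have p3 : (n : ℝ) * (x - (a:ℝ)) ≤ (n:ℝ) := by nlinarith
    have p4 : (m : ℝ) * (y - (b':ℝ)) ≤ (m:ℝ) := by nlinarith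
    have h1 : ((0:ℤ) : ℝ) ≤ ((E:ℤ):ℝ) := by push_cast; linarith
    have h2 : ((E:ℤ):ℝ) ≤ (((m : ℤ) + n : ℤ) : ℝ) := by push_cast; linarith
    have h1' : (0:ℤ) ≤ E := by exact_mod_cast h1
    have h2' : E ≤ (m : ℤ) + n := by exact_mod_cast h2
    exact ⟨lt_of_le_of_ne h1' (Ne.symm hE0), lt_of_le_of_ne h2' hEmn⟩
  · rintro ⟨h1, h2⟩
    have hEreal : ((E : ℤ) : ℝ) = (n : ℝ) * ((a':ℝ) - (a:ℝ)) - (m : ℝ) * ((b':ℝ) - (b:ℝ)) := by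
      push_cast [hE]; ring
    have hnR : (0:ℝ) < (n:ℝ) := by positivity
    have hmR : (0:ℝ) < (m:ℝ) := by positivity
    by_cases hc : E ≤ (n:ℤ)
    · refine ⟨(n : ℝ) * ((a:ℝ) + ((E:ℤ):ℝ)/(n:ℝ)) - (m:ℝ) * (b:ℝ),
        ⟨(a:ℝ) + ((E:ℤ):ℝ)/(n:ℝ), ?_, ?_, rfl⟩, ⟨(b':ℝ), le_refl _, by linarith, ?_⟩⟩
      · have hE1 : (0:ℝ) ≤ ((E:ℤ):ℝ) := by exact_mod_cast h1.le
        have : (0:ℝ) ≤ ((E:ℤ):ℝ)/(n:ℝ) := div_nonneg hE1 hnR.le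
        linarith
      · have hE2 : ((E:ℤ):ℝ) ≤ (n:ℝ) := by exact_mod_cast hc
        have : ((E:ℤ):ℝ)/(n:ℝ) ≤ 1 := by rw [div_le_one hnR]; exact hE2
        linarith
      · have hdiv : (n : ℝ) * (((E:ℤ):ℝ)/(n:ℝ)) = ((E:ℤ):ℝ) := by field_simp
        linear_combination -hEreal - hdiv
    · push_neg at hc
      refine ⟨(n : ℝ) * ((a:ℝ) + 1) - (m:ℝ) * (b:ℝ),
        ⟨(a:ℝ) + 1, by linarith, le_refl _, rfl⟩,
        ⟨(b':ℝ) + (((E:ℤ):ℝ) - (n:ℝ))/(m:ℝ), ?_, ?_, ?_⟩⟩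
      · have hE1 : (n:ℝ) < ((E:ℤ):ℝ) := by exact_mod_cast hc
        have : (0:ℝ) ≤ (((E:ℤ):ℝ) - (n:ℝ))/(m:ℝ) := div_nonneg (by linarith) hmR.le
        linarith
      · have hE2 : ((E:ℤ):ℝ) ≤ (m:ℝ) + (n:ℝ) := by
          have : ((E:ℤ):ℝ) ≤ (((m:ℤ) + n : ℤ) : ℝ) := by exact_mod_cast h2.le
          push_cast at this; linarith
        have : (((E:ℤ):ℝ) - (n:ℝ))/(m:ℝ) ≤ 1 := by rw [div_le_one hmR]; linarith
        linarith
      · have hdiv : (m : ℝ) * ((((E:ℤ):ℝ) - (n:ℝ))/(m:ℝ)) = ((E:ℤ):ℝ) - (n:ℝ) := by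
          field_simp
        linear_combination -hEreal - hdiv

/-- a common transversal line of slope `n/m` meeting both `r_h` and `r_v`
exists iff `-n < n(a'-a) - m(b'-b) < m`; moreover conditions (1B) and (2B) are mutually
exclusive and their disjunction is equivalent to the existence of such a line. -/
theorem statement6 (m n : ℕ) (hm : 0 < m) (hn : 0 < n) (h : Nat.Coprime m n)
    (w : List Bool) (hw : IsDyck m n w) (i j : ℕ) (hij : (i, j) ∈ Opairs w) :
    (MeetsBoth m n w i j ↔
      (-(n : ℤ) < n * (ptX w j - (ptX w i + 1)) - m * (ptY w j - ptY w i) ∧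
        n * (ptX w j - (ptX w i + 1)) - m * (ptY w j - ptY w i) < (m : ℤ))) ∧
    ¬ ((-(n : ℤ) < n * (ptX w j - (ptX w i + 1)) - m * (ptY w j - ptY w i) ∧
          n * (ptX w j - (ptX w i + 1)) - m * (ptY w j - ptY w i) < (m : ℤ) - n) ∧
        ((m : ℤ) - n < n * (ptX w j - (ptX w i + 1)) - m * (ptY w j - ptY w i) ∧
          n * (ptX w j - (ptX w i + 1)) - m * (ptY w j - ptY w i) < (m : ℤ))) ∧
    (((-(n : ℤ) < n * (ptX w j - (ptX w i + 1)) - m * (ptY w j - ptY w i) ∧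
          n * (ptX w j - (ptX w i + 1)) - m * (ptY w j - ptY w i) < (m : ℤ) - n) ∨
        ((m : ℤ) - n < n * (ptX w j - (ptX w i + 1)) - m * (ptY w j - ptY w i) ∧
          n * (ptX w j - (ptX w i + 1)) - m * (ptY w j - ptY w i) < (m : ℤ))) ↔
      MeetsBoth m n w i j) := by
  classical
  have hij' := hij
  simp only [Opairs, Finset.mem_filter, Finset.mem_product, Finset.mem_range] at hij'
  obtain ⟨⟨hi_len, hj_len⟩, hlt, hgi, hgj⟩ := hij'
  obtain ⟨hcf, hct, hdyck⟩ := hw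
  obtain ⟨hiff0, hne⟩ := statement6_core m n hm hn h w hcf hct hdyck i j hj_len hlt hgi hgj
  have hiff : MeetsBoth m n w i j ↔
      (0 < (n : ℤ) * (((w.take j).count false : ℤ) - ((w.take i).count false : ℤ))
            - (m : ℤ) * (((w.take j).count true : ℤ) - ((w.take i).count true : ℤ)) ∧
        (n : ℤ) * (((w.take j).count false : ℤ) - ((w.take i).count false : ℤ))
            - (m : ℤ) * (((w.take j).count true : ℤ) - ((w.take i).count true : ℤ))
          < (m : ℤ) + n) := hiff0
  have hD : (n : ℤ) * (ptX w j - (ptX w i + 1)) - m * (ptY w j - ptY w i)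
      = (n : ℤ) * (((w.take j).count false : ℤ) - ((w.take i).count false : ℤ))
        - (m : ℤ) * (((w.take j).count true : ℤ) - ((w.take i).count true : ℤ)) - n := by
    simp only [ptX, ptY]; ring
  have hn' : (0:ℤ) < n := by exact_mod_cast hn
  rw [hD]
  refine ⟨?_, ?_, ?_⟩
  · rw [hiff]
    constructor <;> rintro ⟨h1, h2⟩ <;> exact ⟨by linarith, by linarith⟩
  · rintro ⟨⟨_, h1⟩, h2, _⟩
    linarith
  · constructor
    · rintro (⟨h1, h2⟩ | ⟨h1, h2⟩) <;> exact hiff.mpr ⟨by linarith, by linarith⟩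
    · intro hmb
      obtain ⟨h1, h2⟩ := hiff.mp hmb
      rcases lt_or_gt_of_ne hne with h3 | h3
      · exact Or.inl ⟨by linarith, by linarith⟩
      · exact Or.inr ⟨by linarith, by linarith⟩
end

section
/- Let m, n be coprime positive integers. The insertion map γ ↦ γ* (inserting a horizontal step after each vertical step) is a bijection from the set of (m,n)-Dyck paths onto the set of rugged (m+n,n)-Dyck paths, where an (m+n,n)-Dyck path is rugged if it has exactly n-1 outer vertices other than the outer vertex farthest from the diagonal. -/
open scoped Classical
open Finset

@[simp] lemma star_nil_eq : star [] = [] := rfl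
@[simp] lemma star_cons_false (l : List Bool) : star (false :: l) = false :: star l := rfl
@[simp] lemma star_cons_true (l : List Bool) : star (true :: l) = true :: false :: star l := rfl

lemma star_append' (a b : List Bool) : star (a ++ b) = star a ++ star b := by
  induction a with
  | nil => rfl
  | cons x l ih => cases x <;> simp [ih]

lemma star_count_false' (w : List Bool) :
    (star w).count false = w.count false + w.count true := by
  induction w with
  | nil => rfl
  | cons x l ih =>
    have hl := List.count_false_add_count_true l
    cases x <;>
      simp only [star_cons_false, star_cons_true, List.count_cons, ih] <;>
      norm_num <;> omega

lemma star_count_true' (w : List Bool) : (star w).count true = w.count true := by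
  induction w with
  | nil => rfl
  | cons x l ih => cases x <;> simp [List.count_cons, ih]

lemma prefix_star {q w : List Bool} (h : q <+: star w) :
    ∃ p, p <+: w ∧ (q = star p ∨ q = star p ++ [true]) := by
  induction w generalizing q with
  | nil =>
    rw [star_nil_eq, List.prefix_nil] at h
    exact ⟨[], by simp, Or.inl (by simp [h])⟩
  | cons x l ih =>
    cases x
    · cases q with
      | nil => exact ⟨[], by simp, Or.inl rfl⟩
      | cons b q' =>
        rw [star_cons_false, List.cons_prefix_cons] at h
        obtain ⟨rfl, h⟩ := h
        obtain ⟨p, hp, hc⟩ := ih h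
        refine ⟨false :: p, by simpa using hp, ?_⟩
        rcases hc with rfl | rfl
        · exact Or.inl (by simp)
        · exact Or.inr (by simp)
    · cases q with
      | nil => exact ⟨[], by simp, Or.inl rfl⟩
      | cons b q' =>
        rw [star_cons_true, List.cons_prefix_cons] at h
        obtain ⟨rfl, h⟩ := h
        cases q' with
        | nil => exact ⟨[], by simp, Or.inr (by simp)⟩
        | cons c q'' =>
          rw [List.cons_prefix_cons] at h
          obtain ⟨rfl, h⟩ := h
          obtain ⟨p, hp, hc⟩ := ih h
          refine ⟨true :: p, by simpa using hp, ?_⟩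
          rcases hc with rfl | rfl
          · exact Or.inl (by simp)
          · exact Or.inr (by simp)

lemma isDyck_star {m n : ℕ} {w : List Bool} (h : IsDyck m n w) :
    IsDyck (m + n) n (star w) := by
  obtain ⟨hf, ht, hp⟩ := h
  refine ⟨by rw [star_count_false', hf, ht], by rw [star_count_true', ht], ?_⟩
  intro q hq
  rw [List.mem_inits] at hq
  obtain ⟨p, hpw, hc⟩ := prefix_star hq
  have hd := hp p ((List.mem_inits _ _).2 hpw)
  have key : n * (p.count false + p.count true) ≤ (m + n) * p.count true := by
    calc n * (p.count false + p.count true)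
        = n * p.count false + n * p.count true := by ring
      _ ≤ m * p.count true + n * p.count true := Nat.add_le_add_right hd _
      _ = (m + n) * p.count true := by ring
  rcases hc with rfl | rfl
  · rw [star_count_false', star_count_true']; exact key
  · have c0 : ([true] : List Bool).count false = 0 := by decide
    have c1 : ([true] : List Bool).count true = 1 := by decide
    have e1 : ((star p) ++ [true]).count false = p.count false + p.count true := by
      rw [List.count_append, star_count_false', c0]
      ring
    have e2 : ((star p) ++ [true]).count true = p.count true + 1 := by
      rw [List.count_append, star_count_true', c1]
    rw [e1, e2]
    calc n * (p.count false + p.count true)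
        ≤ (m + n) * p.count true := key
      _ ≤ (m + n) * (p.count true + 1) := Nat.mul_le_mul_left _ (Nat.le_succ _)

lemma rugged_star (w : List Bool) : Rugged (star w) := by
  induction w with
  | nil => intro i h; rw [star_nil_eq] at h; simp at h
  | cons x l ih =>
    cases x
    · intro i h
      rw [star_cons_false] at h ⊢
      match i with
      | 0 => simp at h
      | k + 1 =>
        rw [List.getElem?_cons_succ] at h ⊢
        exact ih k h
    · intro i h
      rw [star_cons_true] at h ⊢
      match i with
      | 0 => simp
      | 1 => simp at h
      | k + 2 =>
        simp only [List.getElem?_cons_succ] at h ⊢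
        exact ih k h

lemma starInjective : Function.Injective star := by
  intro u
  induction u with
  | nil =>
    intro v h
    cases v with
    | nil => rfl
    | cons b l => cases b <;> simp at h
  | cons a u' ih =>
    intro v h
    cases v with
    | nil => cases a <;> simp at h
    | cons b v' =>
      cases a <;> cases b <;> simp at h
      · rw [ih h]
      · rw [ih h]

lemma rugged_tail (x : Bool) (l : List Bool) (h : Rugged (x :: l)) : Rugged l := by
  intro i hi
  have := h (i + 1) (by simpa using hi)
  simpa using this

lemma exists_star (w : List Bool) (hr : Rugged w) : ∃ u, star u = w := by
  have key : ∀ N (w : List Bool), w.length ≤ N → Rugged w → ∃ u, star u = w := by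
    intro N
    induction N with
    | zero =>
      intro w hw _
      rw [Nat.le_zero, List.length_eq_zero_iff] at hw
      exact ⟨[], by simp [hw]⟩
    | succ N ih =>
      intro w hw hr
      match w with
      | [] => exact ⟨[], rfl⟩
      | false :: l =>
        obtain ⟨u, hu⟩ := ih l (by simp at hw; omega) (rugged_tail _ _ hr)
        exact ⟨false :: u, by simp [hu]⟩
      | true :: l =>
        have h0 := hr 0 (by simp)
        match l, h0 with
        | false :: l', _ =>
          obtain ⟨u, hu⟩ := ih l' (by simp at hw ⊢; omega)
            (rugged_tail _ _ (rugged_tail _ _ hr))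
          exact ⟨true :: u, by simp [hu]⟩
        | [], h0 => simp at h0
        | true :: l', h0 => simp at h0
  exact key w.length w le_rfl hr

lemma isDyck_of_star {m n : ℕ} {u : List Bool} (h : IsDyck (m + n) n (star u)) :
    IsDyck m n u := by
  obtain ⟨hf, ht, hp⟩ := h
  rw [star_count_false'] at hf
  rw [star_count_true'] at ht
  refine ⟨by omega, ht, ?_⟩
  intro p hp'
  rw [List.mem_inits] at hp'
  have hpre : star p <+: star u := by
    obtain ⟨t, rfl⟩ := hp'
    exact ⟨star t, (star_append' p t).symm⟩
  have hq := hp (star p) ((List.mem_inits _ _).2 hpre)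
  rw [star_count_false', star_count_true'] at hq
  have h2 : n * p.count false + n * p.count true
      ≤ m * p.count true + n * p.count true := by
    calc n * p.count false + n * p.count true
        = n * (p.count false + p.count true) := by ring
      _ ≤ (m + n) * p.count true := hq
      _ = m * p.count true + n * p.count true := by ring
  exact Nat.le_of_add_le_add_right h2

/-- the insertion map is a bijection from `(m,n)`-Dyck paths onto rugged
`(m+n,n)`-Dyck paths. -/
theorem statement8 (m n : ℕ) (hm : 0 < m) (hn : 0 < n) (h : Nat.Coprime m n) :
    Set.BijOn star {w : List Bool | IsDyck m n w}
      {w : List Bool | IsDyck (m + n) n w ∧ Rugged w} := by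
  refine ⟨?_, ?_, ?_⟩
  · intro w hw
    exact ⟨isDyck_star hw, rugged_star w⟩
  · exact fun a _ b _ hab => starInjective hab
  · rintro w ⟨hd, hr⟩
    obtain ⟨u, rfl⟩ := exists_star w hr
    exact ⟨u, isDyck_of_star hd, rfl⟩
end
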